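/- Let A generate an immediately differentiable C₀-semigroup (T(t)) on a Banach space X with C_T := sup_{0≤t≤1}‖T(t)‖, and suppose there exist C₀ > 0, t₀ ∈ (0,1] and a non-decreasing continuous K : ℝ₊ → ℝ₊ with t = O(K(t)) as t → ∞ such that ‖AT(t)‖ ≤ C₀ K(1/t) for all t ∈ (0,t₀]. Then there exists a constant c ∈ (0,1) such that ‖R(iη,A)‖ = O(1/K⁻¹(c|η|)) as |η| → ∞. -/

import Mathlib

/-- `R` is the (bounded) resolvent of the (unbounded) operator `A` at `lam`. -/
structure IsResolventAt {X : Type*} [NormedAddCommGroup X] [NormedSpace ℂ X]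
    (A : X →ₗ.[ℂ] X) (lam : ℂ) (R : X →L[ℂ] X) : Prop where
  mem : ∀ x : X, R x ∈ A.domain
  right_inv : ∀ x : X, lam • R x - A ⟨R x, mem x⟩ = x
  left_inv : ∀ y : A.domain, R (lam • (y : X) - A y) = (y : X)

/-- if the generator of an immediately differentiable `C₀`-semigroup
satisfies `‖AT(t)‖ ≤ C₀ K(1/t)` for `t ∈ (0,t₀]`, where `K` is non-decreasing,
continuous, with `t = O(K(t))` as `t → ∞`, then there is `c ∈ (0,1)` with
`‖R(iη,A)‖ = O(1/K⁻¹(c|η|))` as `|η| → ∞`. -/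
theorem stmt13 {X : Type*} [NormedAddCommGroup X] [NormedSpace ℂ X] [CompleteSpace X]
    (T : ℝ → X →L[ℂ] X)
    (hT0 : T 0 = 1)
    (hTadd : ∀ s t : ℝ, 0 ≤ s → 0 ≤ t → T (s + t) = (T s).comp (T t))
    (hTcont : ∀ x : X, ContinuousOn (fun t : ℝ => T t x) (Set.Ici 0))
    (A : X →ₗ.[ℂ] X)
    (hgen : ∀ y : A.domain, HasDerivWithinAt (fun t : ℝ => T t (y : X)) (A y) (Set.Ici 0) 0)
    -- immediate differentiability, with derivatives given by bounded operators `AT t`: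
    (AT : ℝ → X →L[ℂ] X)
    (hAT : ∀ t : ℝ, 0 < t → ∀ x : X, HasDerivAt (fun τ : ℝ => T τ x) (AT t x) t)
    (b : ℝ) (hb : 0 ≤ b)
    (Res : ℝ → X →L[ℂ] X)
    (hRes : ∀ η : ℝ, b ≤ |η| → IsResolventAt A (Complex.I * η) (Res η))
    (K : ℝ → ℝ) (hK0 : ∀ t, 0 ≤ t → 0 ≤ K t)
    (hKmono : MonotoneOn K (Set.Ici (0:ℝ)))
    (hKcont : ContinuousOn K (Set.Ici (0:ℝ)))
    (hKO : ∃ C₁ t₁ : ℝ, 0 < C₁ ∧ ∀ t, t₁ ≤ t → t ≤ C₁ * K t)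
    (C₀ t₀ : ℝ) (hC₀ : 0 < C₀) (ht₀0 : 0 < t₀) (ht₀1 : t₀ ≤ 1)
    (hATK : ∀ t : ℝ, 0 < t → t ≤ t₀ → ‖AT t‖ ≤ C₀ * K (1 / t)) :
    ∃ c : ℝ, 0 < c ∧ c < 1 ∧ ∃ C s' : ℝ, 0 < C ∧ ∀ η : ℝ, s' ≤ |η| →
      ‖Res η‖ ≤ C * (1 / sInf {s : ℝ | 0 ≤ s ∧ c * |η| ≤ K s}) := by
  classical
  obtain ⟨C₁, t₁, hC₁, hK₁⟩ := hKO
  -- uniform bound on [0,1]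
  obtain ⟨M, hM⟩ : ∃ M : ℝ, ∀ τ : ℝ, 0 ≤ τ → τ ≤ 1 → ‖T τ‖ ≤ M := by
    have key : ∀ x : X, ∃ C : ℝ, ∀ i : Set.Icc (0:ℝ) 1, ‖(fun i : Set.Icc (0:ℝ) 1 => T i.1) i x‖ ≤ C := by
      intro x
      obtain ⟨C, hC⟩ := (isCompact_Icc (a := (0:ℝ)) (b := 1)).exists_bound_of_continuousOn
        ((hTcont x).mono Set.Icc_subset_Ici_self)
      exact ⟨C, fun i => hC i.1 i.2⟩
    obtain ⟨M, hM⟩ := banach_steinhaus key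
    exact ⟨M, fun τ h0 h1 => hM ⟨τ, h0, h1⟩⟩
  set CT := max M 1 with hCTdef
  have hCT1 : (1:ℝ) ≤ CT := le_max_right _ _
  have hCT0 : (0:ℝ) < CT := lt_of_lt_of_le one_pos hCT1
  have hTle : ∀ τ : ℝ, 0 ≤ τ → τ ≤ 1 → ‖T τ‖ ≤ CT :=
    fun τ h0 h1 => (hM τ h0 h1).trans (le_max_left _ _)
  -- the constant c
  set c := min (1/2) (1/(2*C₀)) with hcdef
  have hc0 : 0 < c := lt_min (by norm_num) (by positivity)
  have hc1 : c < 1 := lt_of_le_of_lt (min_le_left _ _) (by norm_num)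
  have hcC₀ : C₀ * c ≤ 1/2 := by
    have h := min_le_right (1/2) (1/(2*C₀))
    calc C₀ * c ≤ C₀ * (1/(2*C₀)) := by
          exact mul_le_mul_of_nonneg_left h hC₀.le
      _ = 1/2 := by field_simp
  -- commutation
  have hcomm : ∀ t : ℝ, 0 < t → ∀ y : A.domain, AT t (y : X) = T t (A y) := by
    intro t ht y
    have hg : HasDerivAt (fun s : ℝ => t + s) 1 0 := by
      simpa using (hasDerivAt_id (0:ℝ)).const_add t
    have h1 : HasDerivWithinAt (fun s : ℝ => T (t + s) (y : X)) (AT t (y:X)) (Set.Ici 0) 0 := by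
      have h0 := HasDerivAt.scomp (0:ℝ)
        (by simpa using hAT t ht (y:X) :
          HasDerivAt (fun τ : ℝ => T τ (y:X)) (AT t (y:X)) ((fun s : ℝ => t + s) 0)) hg
      simpa [Function.comp_def] using h0.hasDerivWithinAt
    have h2 : HasDerivWithinAt (fun s : ℝ => T (t + s) (y : X)) (T t (A y)) (Set.Ici 0) 0 := by
      have h3 : HasDerivWithinAt (fun s : ℝ => T t (T s (y:X))) (T t (A y)) (Set.Ici 0) 0 := by
        simpa [Function.comp_def] using
          ((T t).restrictScalars ℝ).hasFDerivAt.comp_hasDerivWithinAt (x := (0:ℝ)) (hgen y)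
      refine h3.congr (fun s hs => ?_) ?_
      · rw [hTadd t s ht.le hs]; rfl
      · rw [hTadd t 0 ht.le le_rfl]; rfl
    exact (uniqueDiffOn_Ici (0:ℝ) 0 Set.self_mem_Ici).eq_deriv _ h1 h2
  -- the threshold
  refine ⟨c, hc0, hc1, 2*CT*(C₁*c) + 4*CT,
    max (max (b+1) ((K (2/t₀) + 1)/c)) (max ((|t₁|+1)/(C₁*c)) 1), by positivity, ?_⟩
  intro η hη
  have hη1 : (1:ℝ) ≤ |η| := le_trans (le_trans (le_max_right ((|t₁|+1)/(C₁*c)) 1) (le_max_right _ _)) hη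
  have hη0 : (0:ℝ) < |η| := lt_of_lt_of_le one_pos hη1
  have hηb : b ≤ |η| := by
    have h1 : b + 1 ≤ |η| :=
      le_trans (le_trans (le_max_left (b+1) ((K (2/t₀) + 1)/c)) (le_max_left _ _)) hη
    linarith
  have hKt₀ : K (2/t₀) + 1 ≤ c * |η| := by
    have h : (K (2/t₀) + 1)/c ≤ |η| :=
      le_trans (le_trans (le_max_right (b+1) ((K (2/t₀) + 1)/c)) (le_max_left _ _)) hη
    rw [div_le_iff₀ hc0] at h
    linarith
  have ht₁η : |t₁| + 1 ≤ C₁ * c * |η| := by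
    have h : (|t₁|+1)/(C₁*c) ≤ |η| :=
      le_trans (le_trans (le_max_left ((|t₁|+1)/(C₁*c)) 1) (le_max_right _ _)) hη
    rw [div_le_iff₀ (by positivity)] at h
    linarith
  set Sset : Set ℝ := {s : ℝ | 0 ≤ s ∧ c * |η| ≤ K s} with hSsetdef
  have hbdd : BddBelow Sset := ⟨0, fun s hs => hs.1⟩
  have hmemS : max t₁ (C₁*c*|η|) ∈ Sset := by
    have h0 : (0:ℝ) ≤ max t₁ (C₁*c*|η|) :=
      le_trans (by positivity) (le_max_right _ _)
    refine ⟨h0, ?_⟩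
    have h1 := hK₁ _ (le_max_left t₁ (C₁*c*|η|))
    have h2 : C₁*c*|η| ≤ C₁ * K (max t₁ (C₁*c*|η|)) := le_trans (le_max_right _ _) h1
    exact le_of_mul_le_mul_left (by rw [← mul_assoc]; exact h2) hC₁
  have hne : Sset.Nonempty := ⟨_, hmemS⟩
  set S := sInf Sset with hSdef
  have hSle : S ≤ C₁*c*|η| := by
    have h := csInf_le hbdd hmemS
    have hmax : max t₁ (C₁*c*|η|) = C₁*c*|η| := max_eq_right (by
      have : t₁ ≤ |t₁| := le_abs_self t₁
      linarith [ht₁η])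
    rwa [hmax] at h
  have hSge : 2/t₀ ≤ S := by
    refine le_csInf hne ?_
    rintro s ⟨hs0, hsK⟩
    by_contra hlt
    push_neg at hlt
    have hKle : K s ≤ K (2/t₀) := hKmono hs0 (by positivity : (0:ℝ) ≤ 2/t₀) hlt.le
    linarith [hsK, hKle, hKt₀]
  have hS0 : 0 < S := lt_of_lt_of_le (by positivity) hSge
  set t := 2/S with htdef
  have ht0 : 0 < t := by positivity
  have htt₀ : t ≤ t₀ := by
    rw [htdef, div_le_iff₀ hS0]
    rw [div_le_iff₀ ht₀0] at hSge
    linarith [hSge]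
  have ht1 : t ≤ 1 := le_trans htt₀ ht₀1
  have hKS : K (S/2) < c * |η| := by
    have hnm : S/2 ∉ Sset := notMem_of_lt_csInf (by linarith [hS0]) hbdd
    by_contra hge
    push_neg at hge
    exact hnm ⟨by positivity, hge⟩
  have hATle : ‖AT t‖ ≤ |η|/2 := by
    have h1 : ‖AT t‖ ≤ C₀ * K (1/t) := hATK t ht0 htt₀
    have h2 : (1:ℝ)/t = S/2 := by rw [htdef]; field_simp
    rw [h2] at h1
    have h3 : C₀ * K (S/2) ≤ C₀ * (c * |η|) :=
      mul_le_mul_of_nonneg_left hKS.le hC₀.le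
    nlinarith [hcC₀, hη0]
  -- now the resolvent bound
  set lam : ℂ := Complex.I * η with hlamdef
  have hlamnorm : ‖lam‖ = |η| := by
    simp [hlamdef, map_mul]
  have hR := hRes η hηb
  refine ContinuousLinearMap.opNorm_le_bound _ (by positivity) ?_
  intro x
  set y : X := Res η x with hydef
  set yD : A.domain := ⟨y, hR.mem x⟩ with hyDdef
  have hA : (A yD : X) = lam • y - x := by
    have := hR.right_inv x
    rw [← this]; abel
  -- the exponential and its derivative
  have hexp : ∀ τ : ℝ, HasDerivAt (fun τ : ℝ => Complex.exp (-lam * τ))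
      (-lam * Complex.exp (-lam * τ)) τ := by
    intro τ
    have h : HasDerivAt (fun z : ℂ => Complex.exp (-lam * z))
        (-lam * Complex.exp (-lam * τ)) (τ:ℂ) := by
      simpa [mul_comm] using ((hasDerivAt_id (τ:ℂ)).const_mul (-lam)).cexp
    exact h.comp_ofReal
  have hexpnorm : ∀ τ : ℝ, ‖Complex.exp (-lam * τ)‖ = 1 := by
    intro τ
    rw [Complex.norm_exp]
    simp [hlamdef]
  set F : ℝ → X := fun τ => Complex.exp (-lam * τ) • T τ y with hFdef
  set G : ℝ → X := fun τ => -(Complex.exp (-lam * τ) • T τ x) with hGdef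
  have hder : ∀ τ ∈ Set.Ioo (0:ℝ) t, HasDerivAt F (G τ) τ := by
    intro τ hτ
    have hTy : HasDerivAt (fun τ : ℝ => T τ y) (T τ (A yD)) τ := by
      have h := hAT τ hτ.1 y
      rwa [hcomm τ hτ.1 yD] at h
    have h := (hexp τ).smul hTy
    have heq : Complex.exp (-lam * τ) • T τ (A yD)
        + (-lam * Complex.exp (-lam * τ)) • T τ y = G τ := by
      simp only [hGdef, hA, map_sub, map_smul, smul_sub, smul_smul]
      module
    rw [← heq]
    exact h
  have hFcont : ContinuousOn F (Set.Icc 0 t) := by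
    apply ContinuousOn.smul
    · exact (Complex.continuous_exp.comp (continuous_const.mul Complex.continuous_ofReal)).continuousOn
    · exact (hTcont y).mono Set.Icc_subset_Ici_self
  have hGcont : ContinuousOn G (Set.Icc 0 t) := by
    apply ContinuousOn.neg
    apply ContinuousOn.smul
    · exact (Complex.continuous_exp.comp (continuous_const.mul Complex.continuous_ofReal)).continuousOn
    · exact (hTcont x).mono Set.Icc_subset_Ici_self
  have hint : ∫ τ in (0:ℝ)..t, G τ = F t - F 0 :=
    intervalIntegral.integral_eq_sub_of_hasDeriv_right_of_le ht0.le hFcont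
      (fun τ hτ => (hder τ hτ).hasDerivWithinAt)
      (hGcont.intervalIntegrable_of_Icc ht0.le)
  have hF0 : F 0 = y := by
    simp [hFdef, hT0]
  -- y = F t + ∫ exp • T τ x
  have hyeq : y = F t - ∫ τ in (0:ℝ)..t, G τ := by
    rw [hint, hF0]; abel
  have hInorm : ‖∫ τ in (0:ℝ)..t, G τ‖ ≤ CT * ‖x‖ * t := by
    have h := intervalIntegral.norm_integral_le_of_norm_le_const
      (C := CT * ‖x‖) (f := G) (a := (0:ℝ)) (b := t) ?_
    · calc ‖∫ τ in (0:ℝ)..t, G τ‖ ≤ CT * ‖x‖ * |t - 0| := h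
        _ = CT * ‖x‖ * t := by rw [sub_zero, abs_of_pos ht0]
    · intro τ hτ
      rw [Set.uIoc_of_le ht0.le] at hτ
      have h1 : ‖G τ‖ = ‖T τ x‖ := by
        rw [hGdef]
        simp only [norm_neg, norm_smul, hexpnorm, one_mul]
      rw [h1]
      calc ‖T τ x‖ ≤ ‖T τ‖ * ‖x‖ := (T τ).le_opNorm x
        _ ≤ CT * ‖x‖ := mul_le_mul_of_nonneg_right
            (hTle τ hτ.1.le (le_trans hτ.2 ht1)) (norm_nonneg x)
  have hy1 : ‖y‖ ≤ ‖T t y‖ + CT * ‖x‖ * t := by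
    have h1 : ‖F t‖ = ‖T t y‖ := by
      rw [hFdef]; simp only [norm_smul, hexpnorm, one_mul]
    calc ‖y‖ = ‖F t - ∫ τ in (0:ℝ)..t, G τ‖ := by rw [← hyeq]
      _ ≤ ‖F t‖ + ‖∫ τ in (0:ℝ)..t, G τ‖ := norm_sub_le _ _
      _ ≤ ‖T t y‖ + CT * ‖x‖ * t := by rw [h1]; linarith [hInorm]
  have hy2 : |η| * ‖T t y‖ ≤ ‖AT t‖ * ‖y‖ + CT * ‖x‖ := by
    have h1 : lam • T t y = AT t y + T t x := by
      have h2 : T t (A yD : X) = lam • T t y - T t x := by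
        rw [hA, map_sub, map_smul]
      rw [hcomm t ht0 yD, h2]; abel
    have h3 : ‖lam • T t y‖ = |η| * ‖T t y‖ := by
      rw [norm_smul, hlamnorm]
    calc |η| * ‖T t y‖ = ‖AT t y + T t x‖ := by rw [← h3, h1]
      _ ≤ ‖AT t y‖ + ‖T t x‖ := norm_add_le _ _
      _ ≤ ‖AT t‖ * ‖y‖ + CT * ‖x‖ := by
          gcongr
          · exact (AT t).le_opNorm y
          · calc ‖T t x‖ ≤ ‖T t‖ * ‖x‖ := (T t).le_opNorm x
              _ ≤ CT * ‖x‖ := mul_le_mul_of_nonneg_right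
                  (hTle t ht0.le ht1) (norm_nonneg x)
  -- arithmetic
  have hy0 : (0:ℝ) ≤ ‖y‖ := norm_nonneg y
  have hx0 : (0:ℝ) ≤ ‖x‖ := norm_nonneg x
  clear hyDdef hFdef hGdef hder hFcont hGcont hint hF0 hA
  clear_value G F yD y lam t S c CT
  have hN0 : (0:ℝ) ≤ CT * ‖x‖ := mul_nonneg hCT0.le hx0
  have m1 := mul_le_mul_of_nonneg_left hy1 hη0.le
  have r1 : |η| * (‖T t y‖ + CT * ‖x‖ * t) = |η| * ‖T t y‖ + |η| * (CT * ‖x‖ * t) := by ring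
  have h7 : ‖AT t‖ * ‖y‖ ≤ |η|/2 * ‖y‖ := mul_le_mul_of_nonneg_right hATle hy0
  have r2 : |η|/2 * ‖y‖ = 1/2 * (|η| * ‖y‖) := by ring
  have h6 : |η| * ‖y‖ ≤ 2 * (CT * ‖x‖) + 2 * (|η| * (CT * ‖x‖ * t)) := by linarith
  have m2 := mul_le_mul_of_nonneg_left h6 hS0.le
  have e1 : S * t = 2 := by rw [htdef]; field_simp
  have r3 : S * (2 * (CT * ‖x‖) + 2 * (|η| * (CT * ‖x‖ * t)))
      = 2 * (S * (CT * ‖x‖)) + 4 * (|η| * (CT * ‖x‖)) := by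
    linear_combination (2 * |η| * (CT * ‖x‖)) * e1
  have m3 : S * (CT * ‖x‖) ≤ C₁ * c * |η| * (CT * ‖x‖) :=
    mul_le_mul_of_nonneg_right hSle hN0
  have r4 : 2 * (C₁ * c * |η| * (CT * ‖x‖)) + 4 * (|η| * (CT * ‖x‖))
      = |η| * ((2*CT*(C₁*c) + 4*CT) * ‖x‖) := by ring
  have r5 : S * (|η| * ‖y‖) = |η| * (S * ‖y‖) := by ring
  have h13 : |η| * (S * ‖y‖) ≤ |η| * ((2*CT*(C₁*c) + 4*CT) * ‖x‖) := by linarith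
  have h12 : S * ‖y‖ ≤ (2*CT*(C₁*c) + 4*CT) * ‖x‖ := le_of_mul_le_mul_left h13 hη0
  have r7 : ‖y‖ * S = S * ‖y‖ := by ring
  have hfin : ‖y‖ ≤ (2*CT*(C₁*c) + 4*CT) * ‖x‖ / S := by
    rw [le_div_iff₀ hS0]
    linarith
  calc ‖y‖ ≤ (2*CT*(C₁*c) + 4*CT) * ‖x‖ / S := hfin
    _ = (2*CT*(C₁*c) + 4*CT) * (1 / S) * ‖x‖ := by ring
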